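/- arXiv:2306.07566 — 3 statements merged into one kernel-verified Lean document; each statement's English description precedes it below -/
import Mathlib

section
/- Nuisance perturbation bound for weighted surrogate risk: let Φ be the hinge loss, let w, ŵ: X → ℝ be measurable, and let h: X → ℝ satisfy ‖h‖_∞ ≤ C. Then for every x, |ŵ(x)|·Φ(sgn(ŵ(x))h(x)) - |w(x)|·Φ(sgn(w(x))h(x)) ≤ (1 + C)·|ŵ(x) - w(x)|. Consequently sup_{‖h‖_∞ ≤ C} |E[|ŵ(X)|Φ(sgn(ŵ(X))h(X))] - E[|w(X)|Φ(sgn(w(X))h(X))]| ≤ (1 + C)·E|ŵ(X) - w(X)|. -/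
open MeasureTheory

/-- sign convention: `sgn t = 1` if `t ≥ 0`, and `-1` otherwise. -/
noncomputable def sgn (t : ℝ) : ℝ := if 0 ≤ t then 1 else -1

/-- hinge loss -/
noncomputable def hinge (α : ℝ) : ℝ := max (1 - α) 0

lemma key_eq (a h : ℝ) : |a| * hinge (sgn a * h) = max (|a| - a * h) 0 := by
  have habs : |a| * sgn a = a := by
    unfold sgn
    split_ifs with h0
    · simp [abs_of_nonneg h0]
    · push_neg at h0
      simp [abs_of_neg h0]
  unfold hinge
  rw [mul_max_of_nonneg _ _ (abs_nonneg a), mul_zero, mul_sub, mul_one,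
    ← mul_assoc, habs]

lemma ptwise (a b h C : ℝ) (hh : |h| ≤ C) :
    |a| * hinge (sgn a * h) - |b| * hinge (sgn b * h) ≤ (1 + C) * |a - b| := by
  rw [key_eq, key_eq]
  have h1 : max (|a| - a * h) 0 - max (|b| - b * h) 0 ≤
      |(|a| - a * h) - (|b| - b * h)| := by
    rcases le_total (|a| - a * h) 0 with h2 | h2
    · have := abs_nonneg ((|a| - a * h) - (|b| - b * h))
      have := le_max_right (|b| - b * h) 0
      simp [max_eq_right h2]; linarith
    · rw [max_eq_left h2]
      rcases le_total (|b| - b * h) 0 with h3 | h3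
      · rw [max_eq_right h3]
        calc |a| - a * h - 0 ≤ (|a| - a * h) - (|b| - b * h) := by linarith
          _ ≤ _ := le_abs_self _
      · rw [max_eq_left h3]; exact le_abs_self _
  refine h1.trans ?_
  have h2 : (|a| - a * h) - (|b| - b * h) = (|a| - |b|) - (a - b) * h := by ring
  rw [h2]
  calc |(|a| - |b|) - (a - b) * h| ≤ |(|a| - |b|)| + |(a - b) * h| := abs_sub _ _
    _ ≤ |a - b| + |a - b| * C := by
        have e1 : |(|a| - |b|)| ≤ |a - b| := abs_abs_sub_abs_le_abs_sub a b
        have e2 : |(a - b) * h| ≤ |a - b| * C := by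
          rw [abs_mul]
          exact mul_le_mul_of_nonneg_left hh (abs_nonneg _)
        linarith
    _ ≤ (1 + C) * |a - b| := by nlinarith [abs_nonneg (a-b)]

/-- nuisance perturbation bound for the weighted hinge surrogate risk:
pointwise, `|wh|Φ(sgn(wh)h) - |w|Φ(sgn(w)h) ≤ (1+C)|wh - w|` whenever `‖h‖_∞ ≤ C`; and
consequently the difference of the corresponding expected risks is bounded by
`(1+C)·E|wh - w|` uniformly over `‖h‖_∞ ≤ C`. -/
theorem stmt_13 {𝓧 : Type*} [MeasurableSpace 𝓧]
    (μ : Measure 𝓧) [IsProbabilityMeasure μ]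
    (w wh : 𝓧 → ℝ) (hwm : Measurable w) (hwhm : Measurable wh)
    (C : ℝ) (hC : 0 < C) :
    (∀ h : 𝓧 → ℝ, (∀ x, |h x| ≤ C) → ∀ x,
      |wh x| * hinge (sgn (wh x) * h x) - |w x| * hinge (sgn (w x) * h x)
        ≤ (1 + C) * |wh x - w x|)
    ∧ (∀ h : 𝓧 → ℝ, Measurable h → (∀ x, |h x| ≤ C) →
        Integrable (fun x => |wh x| * hinge (sgn (wh x) * h x)) μ →
        Integrable (fun x => |w x| * hinge (sgn (w x) * h x)) μ →
        Integrable (fun x => |wh x - w x|) μ →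
        |(∫ x, |wh x| * hinge (sgn (wh x) * h x) ∂μ)
            - ∫ x, |w x| * hinge (sgn (w x) * h x) ∂μ|
          ≤ (1 + C) * ∫ x, |wh x - w x| ∂μ) := by
  constructor
  · intro h hh x
    exact ptwise _ _ _ _ (hh x)
  · intro h hm hh hi1 hi2 hi3
    rw [← integral_sub hi1 hi2]
    have := norm_integral_le_integral_norm (μ := μ)
      (f := fun x => |wh x| * hinge (sgn (wh x) * h x) - |w x| * hinge (sgn (w x) * h x))
    simp only [Real.norm_eq_abs] at this
    refine this.trans ?_
    rw [← integral_const_mul]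
    refine integral_mono ((hi1.sub hi2).abs) (hi3.const_mul _) ?_
    intro x
    have h1 := ptwise (wh x) (w x) (h x) C (hh x)
    have h2 := ptwise (w x) (wh x) (h x) C (hh x)
    rw [abs_sub_comm] at h2
    rw [abs_le]
    constructor <;> simp only [Pi.sub_apply] <;> linarith
end

section
/- Massart's finite class lemma: let A ⊂ ℝⁿ be a finite set with r = sup_{x∈A} ‖x‖₂, and let σ₁,...,σₙ be independent Rademacher random variables (uniform on {−1,+1}). Then E[sup_{x∈A} (1/n)·Σᵢ σᵢxᵢ] ≤ r·√(2·log|A|)/n. -/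
open MeasureTheory ProbabilityTheory Real

lemma massart_int_bdd {Ω : Type*} [MeasurableSpace Ω] (μ : Measure Ω) [IsProbabilityMeasure μ]
    {f : Ω → ℝ} (hf : Measurable f) {C : ℝ} (h : ∀ ω, |f ω| ≤ C) : Integrable f μ :=
  (integrable_const C).mono' hf.aestronglyMeasurable (ae_of_all _ h)

lemma massart_two_point {Ω : Type*} [MeasurableSpace Ω] (μ : Measure Ω) [IsProbabilityMeasure μ]
    (σ : Ω → ℝ) (hm : Measurable σ) (hv : ∀ ω, σ ω = 1 ∨ σ ω = -1)
    (hd : μ {ω | σ ω = 1} = 1/2) (f : ℝ → ℝ) :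
    ∫ ω, f (σ ω) ∂μ = (f 1 + f (-1)) / 2 := by
  have hs : MeasurableSet {ω | σ ω = 1} := hm (measurableSet_singleton 1)
  have hsc : μ {ω | σ ω = 1}ᶜ = 1/2 := by
    rw [measure_compl hs (measure_ne_top μ _), hd, measure_univ]
    exact ENNReal.sub_half ENNReal.one_ne_top
  have hfun : (fun ω => f (σ ω)) =
      (fun ω => Set.indicator {ω | σ ω = 1} (fun _ => f 1) ω
        + Set.indicator {ω | σ ω = 1}ᶜ (fun _ => f (-1)) ω) := by
    funext ω
    by_cases h : σ ω = 1
    · simp [Set.indicator_of_mem, Set.indicator_of_notMem, h]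
    · have : σ ω = -1 := (hv ω).resolve_left h
      simp [Set.indicator_apply, Set.mem_setOf_eq, h, this]
      norm_num
  rw [hfun, integral_add ((integrable_const _).indicator hs)
      ((integrable_const _).indicator hs.compl),
    integral_indicator_const _ hs, integral_indicator_const _ hs.compl, measureReal_def, measureReal_def, hd, hsc]
  simp [ENNReal.toReal_div]
  ring

set_option maxHeartbeats 1000000 in
/-- Massart's finite class lemma. For a finite nonempty `A ⊆ ℝⁿ` with
`‖x‖₂ ≤ r` for all `x ∈ A`, and independent Rademacher variables `σ₁,…,σₙ`,
`E[sup_{x ∈ A} (1/n)·Σᵢ σᵢ xᵢ] ≤ r·√(2 log|A|)/n`. -/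
theorem stmt_14 {Ω : Type*} [MeasurableSpace Ω]
    (μ : Measure Ω) [IsProbabilityMeasure μ]
    (n : ℕ) (hn : 0 < n)
    (σ : Fin n → Ω → ℝ)
    (hσmeas : ∀ i, Measurable (σ i))
    (hσindep : iIndepFun σ μ)
    (hσval : ∀ i, ∀ ω, σ i ω = 1 ∨ σ i ω = -1)
    (hσdist : ∀ i, μ {ω | σ i ω = 1} = 1 / 2)
    (A : Finset (Fin n → ℝ)) (hA : A.Nonempty)
    (r : ℝ) (hr : ∀ x ∈ A, Real.sqrt (∑ i, (x i) ^ 2) ≤ r) :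
    ∫ ω, A.sup' hA (fun x => (1 / (n : ℝ)) * ∑ i, σ i ω * x i) ∂μ
      ≤ r * Real.sqrt (2 * Real.log (A.card : ℝ)) / n := by
  classical
  have hσabs : ∀ i ω, |σ i ω| = 1 := fun i ω => by rcases hσval i ω with h | h <;> simp [h]
  set S : (Fin n → ℝ) → Ω → ℝ := fun x ω => ∑ i, σ i ω * x i with hS
  have hSmeas : ∀ x, Measurable (S x) := fun x =>
    Finset.measurable_sum _ fun i _ => (hσmeas i).mul_const _
  have hSbd : ∀ x ω, |S x ω| ≤ ∑ i, |x i| := by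
    intro x ω
    calc |∑ i, σ i ω * x i| ≤ ∑ i, |σ i ω * x i| := Finset.abs_sum_le_sum_abs _ _
      _ = ∑ i, |x i| := by simp [abs_mul, hσabs]
  set G : Ω → ℝ := fun ω => A.sup' hA fun x => S x ω with hG
  set B : ℝ := A.sup' hA fun x => ∑ i, |x i| with hB
  have hGbd : ∀ ω, |G ω| ≤ B := by
    intro ω
    rw [abs_le]
    obtain ⟨x, hx⟩ := id hA
    constructor
    · calc -B ≤ -(∑ i, |x i|) :=
            neg_le_neg (Finset.le_sup' (f := fun y => ∑ i, |y i|) hx)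
        _ ≤ S x ω := neg_le_of_abs_le (hSbd x ω)
        _ ≤ G ω := Finset.le_sup' (f := fun y => S y ω) hx
    · exact Finset.sup'_le _ _ fun y hy =>
        le_trans (le_abs_self _) (le_trans (hSbd y ω)
          (Finset.le_sup' (f := fun z => ∑ i, |z i|) hy))
  have hGmeas : Measurable G := by
    have hGeq : G = A.sup' hA S := by
      funext ω; rw [hG]; exact (Finset.sup'_apply hA S ω).symm
    rw [hGeq]; exact Finset.measurable_sup' hA fun x _ => hSmeas x
  have hGint : Integrable G μ := massart_int_bdd μ hGmeas hGbd
  have hn' : (0:ℝ) < n := by exact_mod_cast hn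
  have hLHS : (fun ω => A.sup' hA (fun x => (1 / (n : ℝ)) * ∑ i, σ i ω * x i))
      = fun ω => (1/(n:ℝ)) * G ω := by
    funext ω
    rw [hG]
    exact (Finset.comp_sup'_eq_sup'_comp hA (fun z => (1/(n:ℝ)) * z) fun a b => by
      exact mul_max_of_nonneg a b (by positivity)).symm
  rw [hLHS, integral_const_mul]
  obtain ⟨x₀, hx₀⟩ := id hA
  have hr0 : 0 ≤ r := le_trans (Real.sqrt_nonneg _) (hr x₀ hx₀)
  have key : ∫ ω, G ω ∂μ ≤ r * Real.sqrt (2 * Real.log (A.card : ℝ)) := by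
    rcases (Finset.one_le_card.mpr ⟨x₀, hx₀⟩).eq_or_lt with h1 | h2
    · -- singleton case
      obtain ⟨x, hx⟩ := Finset.card_eq_one.mp h1.symm
      have hmem : x ∈ A := by rw [hx]; exact Finset.mem_singleton_self x
      have hGeq : ∀ ω, G ω = S x ω := fun ω => le_antisymm
        (Finset.sup'_le _ _ fun y hy => by
          rw [hx] at hy; rw [Finset.mem_singleton.mp hy])
        (Finset.le_sup' (f := fun y => S y ω) hmem)
      have hint0 : ∀ i, ∫ ω, σ i ω ∂μ = 0 := fun i => by
        have := massart_two_point μ (σ i) (hσmeas i) (hσval i) (hσdist i) (fun y => y)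
        simpa using this
      have hzero : ∫ ω, G ω ∂μ = 0 := by
        simp_rw [hGeq, hS]
        rw [integral_finset_sum _ fun i _ => massart_int_bdd μ ((hσmeas i).mul_const _)
          (C := |x i|) (fun ω => by rw [abs_mul, hσabs, one_mul])]
        simp_rw [integral_mul_const]
        simp [hint0]
      rw [hzero, ← h1]
      simp
    · -- main case
      have hN1 : (1:ℝ) < (A.card : ℝ) := by exact_mod_cast h2
      have hNpos : (0:ℝ) < (A.card : ℝ) := by linarith
      have hlog : 0 < Real.log (A.card : ℝ) := Real.log_pos hN1
      have hrpos : 0 < r := by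
        rcases hr0.lt_or_eq with h | h
        · exact h
        · exfalso
          have hall : ∀ x ∈ A, x = (0 : Fin n → ℝ) := by
            intro x hx
            have h1' := hr x hx
            rw [← h] at h1'
            have hsum0 : ∑ i, (x i)^2 = 0 := by
              have hnn : 0 ≤ ∑ i, (x i)^2 :=
                Finset.sum_nonneg fun i _ => sq_nonneg (x i)
              have := le_antisymm h1' (Real.sqrt_nonneg _)
              exact (Real.sqrt_eq_zero hnn).mp this
            funext i
            have := (Finset.sum_eq_zero_iff_of_nonneg
              (fun i _ => sq_nonneg (x i))).mp hsum0 i (Finset.mem_univ i)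
            exact pow_eq_zero_iff (two_ne_zero) |>.mp this
          have : A.card ≤ 1 := Finset.card_le_one.mpr fun a ha b hb => by
            rw [hall a ha, hall b hb]
          omega
      set t : ℝ := Real.sqrt (2 * Real.log (A.card : ℝ)) / r with ht_def
      have hsqrtpos : 0 < Real.sqrt (2 * Real.log (A.card : ℝ)) :=
        Real.sqrt_pos.mpr (by linarith)
      have ht : 0 < t := div_pos hsqrtpos hrpos
      have hexpint : Integrable (fun ω => Real.exp (t * G ω)) μ :=
        massart_int_bdd μ ((hGmeas.const_mul t).exp) (C := Real.exp (t*B)) fun ω => by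
          rw [abs_of_pos (Real.exp_pos _)]
          exact Real.exp_le_exp.mpr (mul_le_mul_of_nonneg_left ((abs_le.mp (hGbd ω)).2) ht.le)
      have jensen : Real.exp (t * ∫ ω, G ω ∂μ) ≤ ∫ ω, Real.exp (t * G ω) ∂μ := by
        have h := convexOn_exp.map_integral_le (f := fun ω => t * G ω) (μ := μ)
          Real.continuous_exp.continuousOn isClosed_univ
          (ae_of_all _ fun ω => Set.mem_univ _) (hGint.const_mul t) hexpint
        beta_reduce at h
        rwa [integral_const_mul] at h
      have hexpSint : ∀ x ∈ A, Integrable (fun ω => Real.exp (t * S x ω)) μ := fun x _ =>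
        massart_int_bdd μ ((hSmeas x).const_mul t).exp (C := Real.exp (t * ∑ i, |x i|))
          fun ω => by
            rw [abs_of_pos (Real.exp_pos _)]
            exact Real.exp_le_exp.mpr
              (mul_le_mul_of_nonneg_left (le_of_abs_le (hSbd x ω)) ht.le)
      have hpt : ∀ ω, Real.exp (t * G ω) ≤ ∑ x ∈ A, Real.exp (t * S x ω) := by
        intro ω
        obtain ⟨x, hx, hxe⟩ := Finset.exists_mem_eq_sup' hA (fun x => S x ω)
        calc Real.exp (t * G ω) = Real.exp (t * S x ω) := by simp only [hG]; rw [hxe]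
          _ ≤ ∑ y ∈ A, Real.exp (t * S y ω) :=
            Finset.single_le_sum (f := fun y => Real.exp (t * S y ω))
              (fun y _ => (Real.exp_pos _).le) hx
      have step2 : ∫ ω, Real.exp (t * G ω) ∂μ ≤ ∑ x ∈ A, ∫ ω, Real.exp (t * S x ω) ∂μ := by
        rw [← integral_finset_sum A hexpSint]
        exact integral_mono hexpint (integrable_finset_sum A hexpSint) hpt
      have hmgfb : ∀ x ∈ A, ∫ ω, Real.exp (t * S x ω) ∂μ ≤ Real.exp (t^2 * r^2 / 2) := by
        intro x hx
        have hXind : iIndepFun (fun i => fun ω => σ i ω * x i) μ :=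
          hσindep.comp (fun i => (· * x i)) (fun i => measurable_mul_const _)
        have hXmeas : ∀ i, Measurable fun ω => σ i ω * x i := fun i => (hσmeas i).mul_const _
        have hsum : S x = ∑ i, (fun ω => σ i ω * x i) := by
          funext ω; simp [hS, Finset.sum_apply]
        have h1 : ∫ ω, Real.exp (t * S x ω) ∂μ = mgf (S x) μ t := rfl
        rw [h1, hsum, hXind.mgf_sum hXmeas]
        calc ∏ i, mgf (fun ω => σ i ω * x i) μ t
            ≤ ∏ i, Real.exp (t^2 * (x i)^2 / 2) := by
              refine Finset.prod_le_prod (fun i _ => mgf_nonneg) (fun i _ => ?_)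
              have htp := massart_two_point μ (σ i) (hσmeas i) (hσval i) (hσdist i)
                (fun y => Real.exp (t * (y * x i)))
              calc mgf (fun ω => σ i ω * x i) μ t = Real.cosh (t * x i) := by
                    rw [mgf, htp, Real.cosh_eq]
                    simp [mul_comm, neg_mul, mul_neg]
                _ ≤ Real.exp ((t * x i)^2/2) := Real.cosh_le_exp_half_sq _
                _ = Real.exp (t^2 * (x i)^2 / 2) := by ring_nf
          _ = Real.exp (t^2 * (∑ i, (x i)^2) / 2) := by
              rw [← Real.exp_sum]
              congr 1
              rw [← Finset.sum_div, ← Finset.mul_sum]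
          _ ≤ Real.exp (t^2 * r^2 / 2) := by
              apply Real.exp_le_exp.mpr
              have hxr : ∑ i, (x i)^2 ≤ r^2 := by
                have h1' := hr x hx
                nlinarith [Real.sq_sqrt (Finset.sum_nonneg
                  fun i (_ : i ∈ Finset.univ) => sq_nonneg (x i)),
                  Real.sqrt_nonneg (∑ i, (x i)^2)]
              nlinarith [sq_nonneg t]
      have step3 : ∑ x ∈ A, ∫ ω, Real.exp (t * S x ω) ∂μ
          ≤ (A.card : ℝ) * Real.exp (t^2*r^2/2) := by
        calc ∑ x ∈ A, ∫ ω, Real.exp (t * S x ω) ∂μ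
            ≤ ∑ _x ∈ A, Real.exp (t^2*r^2/2) := Finset.sum_le_sum hmgfb
          _ = (A.card : ℝ) * Real.exp (t^2*r^2/2) := by
              rw [Finset.sum_const, nsmul_eq_mul]
      have main : Real.exp (t * ∫ ω, G ω ∂μ) ≤ (A.card : ℝ) * Real.exp (t^2*r^2/2) :=
        le_trans jensen (le_trans step2 step3)
      have hlogle : t * ∫ ω, G ω ∂μ ≤ Real.log (A.card : ℝ) + t^2*r^2/2 := by
        have hpos : (0:ℝ) < (A.card : ℝ) * Real.exp (t^2*r^2/2) :=
          mul_pos hNpos (Real.exp_pos _)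
        have h := (Real.le_log_iff_exp_le hpos).mpr main
        rwa [Real.log_mul (ne_of_gt hNpos) (Real.exp_ne_zero _), Real.log_exp] at h
      have hts : t^2 * r^2 / 2 = Real.log (A.card : ℝ) := by
        rw [ht_def, div_pow, Real.sq_sqrt (by linarith)]
        field_simp
      have hfin : ∫ ω, G ω ∂μ ≤ 2 * Real.log (A.card : ℝ) / t := by
        rw [le_div_iff₀ ht]
        nlinarith [hlogle, hts]
      calc ∫ ω, G ω ∂μ ≤ 2 * Real.log (A.card : ℝ) / t := hfin
        _ = r * Real.sqrt (2 * Real.log (A.card : ℝ)) := by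
            rw [ht_def, div_div_eq_mul_div, mul_comm (2 * Real.log (A.card : ℝ)) r,
              mul_div_assoc, Real.div_sqrt]
  calc (1/(n:ℝ)) * ∫ ω, G ω ∂μ
      ≤ (1/(n:ℝ)) * (r * Real.sqrt (2 * Real.log (A.card : ℝ))) :=
        mul_le_mul_of_nonneg_left key (by positivity)
    _ = r * Real.sqrt (2 * Real.log (A.card : ℝ)) / n := by ring
end

section
/- Linear-programming partial bounds with a binary instrument: let p_{11,z} = P(Y=1, D=1 | Z=z), p_{na,z} = P(D=0 | Z=z) for z ∈ {0,1}. Suppose the joint distribution arises from latent response types q_{kj} ≥ 0 (k ∈ {0,1,2,3}, j ∈ {0,1}) with Σ q_{kj} = 1, E[Y*] = q_{01}+q_{11}+q_{21}+q_{31}, p_{na,0} = q_{00}+q_{01}+q_{10}+q_{11}, p_{11,0} = q_{21}+q_{31}, p_{na,1} = q_{00}+q_{01}+q_{20}+q_{21}, p_{11,1} = q_{11}+q_{31}. Then max{p_{11,0}, p_{11,1}} ≤ E[Y*] ≤ min{p_{11,0}+p_{na,0}, p_{11,1}+p_{na,1}}. -/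
/-- Balke–Pearl-type linear programming bounds with a binary instrument.
Given latent response-type probabilities `q k j ≥ 0` summing to one, with
`E[Y*] = q₀₁+q₁₁+q₂₁+q₃₁`, `p_{na,0} = q₀₀+q₀₁+q₁₀+q₁₁`, `p_{11,0} = q₂₁+q₃₁`,
`p_{na,1} = q₀₀+q₀₁+q₂₀+q₂₁`, `p_{11,1} = q₁₁+q₃₁`, we have
`max(p_{11,0}, p_{11,1}) ≤ E[Y*] ≤ min(p_{11,0}+p_{na,0}, p_{11,1}+p_{na,1})`. -/
theorem stmt_19 (q : Fin 4 → Fin 2 → ℝ)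
    (hq : ∀ k j, 0 ≤ q k j)
    (hsum : ∑ k, ∑ j, q k j = 1)
    (EY p110 p111 pna0 pna1 : ℝ)
    (hEY : EY = q 0 1 + q 1 1 + q 2 1 + q 3 1)
    (hna0 : pna0 = q 0 0 + q 0 1 + q 1 0 + q 1 1)
    (h110 : p110 = q 2 1 + q 3 1)
    (hna1 : pna1 = q 0 0 + q 0 1 + q 2 0 + q 2 1)
    (h111 : p111 = q 1 1 + q 3 1) :
    max p110 p111 ≤ EY ∧ EY ≤ min (p110 + pna0) (p111 + pna1) := by
  have h00 := hq 0 0; have h01 := hq 0 1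
  have h10 := hq 1 0; have h11 := hq 1 1
  have h20 := hq 2 0; have h21 := hq 2 1
  have h30 := hq 3 0; have h31 := hq 3 1
  constructor
  · apply max_le <;> linarith
  · apply le_min <;> linarith
end
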